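/- Let 𝔸 be an (H,μ)-bimodule algebra satisfying the generalized associativity conditions and F a twist of H. Then the deformation isomorphism D_F : 𝔸_⋆ → 𝔸 intertwines the H^F-adjoint actions: D_F(ξ ▶ P) = ξ ▶_F D_F(P) for all ξ ∈ H^F and P ∈ 𝔸, where ξ ▶ P = ξ₁ P S(ξ₂) uses the coproduct of H and ξ ▶_F P = ξ_{1_F} P S^F(ξ_{2_F}) uses the twisted coproduct and antipode of H^F. -/

import Mathlib

set_option maxHeartbeats 1000000
set_option synthInstance.maxHeartbeats 400000


open TensorProduct

noncomputable section

variable (K : Type*) [CommRing K] (H : Type*) [Ring H] [HopfAlgebra K H]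

namespace TwistPaper

def muH : H ⊗[K] H →ₗ[K] H := LinearMap.mul' K H
def ΔH : H →ₗ[K] H ⊗[K] H := Coalgebra.comul
def εH : H →ₗ[K] K := Coalgebra.counit
def SH : H →ₗ[K] H := HopfAlgebra.antipode (R := K)

def ins3 : H ⊗[K] H →ₗ[K] H ⊗[K] (H ⊗[K] H) :=
  LinearMap.lTensor H ((TensorProduct.mk K H H).flip 1)
def ins1 : H ⊗[K] H →ₗ[K] H ⊗[K] (H ⊗[K] H) :=
  TensorProduct.mk K H (H ⊗[K] H) 1
def comulLeft : H ⊗[K] H →ₗ[K] H ⊗[K] (H ⊗[K] H) :=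
  (TensorProduct.assoc K H H H).toLinearMap ∘ₗ (ΔH K H).rTensor H
def comulRight : H ⊗[K] H →ₗ[K] H ⊗[K] (H ⊗[K] H) :=
  (ΔH K H).lTensor H
def counitLeft : H ⊗[K] H →ₗ[K] H :=
  (TensorProduct.lid K H).toLinearMap ∘ₗ (εH K H).rTensor H
def counitRight : H ⊗[K] H →ₗ[K] H :=
  (TensorProduct.rid K H).toLinearMap ∘ₗ (εH K H).lTensor H

/-- `F` is a twist of the Hopf algebra `H` with inverse `Finv`. -/
structure IsTwist (F Finv : H ⊗[K] H) : Prop where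
  mul_inv : F * Finv = 1
  inv_mul : Finv * F = 1
  cocycle : ins3 K H F * comulLeft K H F = ins1 K H F * comulRight K H F
  counit_left : counitLeft K H F = 1
  counit_right : counitRight K H F = 1

/-- The twisted coproduct `Δ^F(ξ) = F Δ(ξ) F⁻¹`. -/
def twistComul (F Finv : H ⊗[K] H) : H →ₗ[K] H ⊗[K] H :=
  LinearMap.mulLeft K F ∘ₗ LinearMap.mulRight K Finv ∘ₗ ΔH K H

/-- `χ = f^α S(f_α)`. -/
def chi (F : H ⊗[K] H) : H := muH K H ((SH K H).lTensor H F)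
/-- `χ⁻¹ = S(f̄^α) f̄_α`. -/
def chiInv (Finv : H ⊗[K] H) : H := muH K H ((SH K H).rTensor H Finv)

/-- The twisted antipode `S^F(ξ) = χ S(ξ) χ⁻¹`. -/
def twistAntipode (F Finv : H ⊗[K] H) : H →ₗ[K] H :=
  LinearMap.mulLeft K (chi K H F) ∘ₗ LinearMap.mulRight K (chiInv K H Finv) ∘ₗ SH K H

/-- `sw x f g c v w = Σ c (f x¹ v) (g x² w)` for `x = Σ x¹ ⊗ x²`. -/
def sw {V W V' W' Z : Type*}
    [AddCommGroup V] [Module K V] [AddCommGroup W] [Module K W]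
    [AddCommGroup V'] [Module K V'] [AddCommGroup W'] [Module K W']
    [AddCommGroup Z] [Module K Z]
    (x : H ⊗[K] H) (f : H →ₗ[K] V →ₗ[K] V') (g : H →ₗ[K] W →ₗ[K] W')
    (c : V' →ₗ[K] W' →ₗ[K] Z) : V →ₗ[K] W →ₗ[K] Z :=
  ((TensorProduct.mapBilinear (σ₁₂ := RingHom.id K) (M := H) (N := H) (M₂ := V') (N₂ := W')).compr₂
      (TensorProduct.lift c ∘ₗ LinearMap.applyₗ (R := K) x)).compl₁₂ f.flip g.flip

/-- `ρ` is a left `H`-module structure. -/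
def IsHAction {V : Type*} [AddCommGroup V] [Module K V] (ρ : H →ₗ[K] V →ₗ[K] V) : Prop :=
  (∀ ξ ζ : H, ∀ v : V, ρ (ξ * ζ) v = ρ ξ (ρ ζ v)) ∧ (∀ v : V, ρ 1 v = v)

variable {M : Type*} [AddCommGroup M] [Module K M]

/-- `twistEnd F1 F2 (η ⊗ ζ) = F1 η ∘ₗ F2 ζ` as an operator on `M`. -/
def twistEnd (F1 F2 : H →ₗ[K] M →ₗ[K] M) : H ⊗[K] H →ₗ[K] M →ₗ[K] M :=
  TensorProduct.lift ((LinearMap.llcomp K M M M ∘ₗ F1).compl₂ F2)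

/-- `𝔸` (with product `m`) is an `(H,μ)`-bimodule (left action `L`, right action `Rm`)
satisfying the generalized associativity conditions
`(PQ)ξ = P(Qξ)`, `(Pξ)Q = P(ξQ)`, `ξ(PQ) = (ξP)Q`. -/
structure IsHBimoduleAlgebra (m : M →ₗ[K] M →ₗ[K] M) (L Rm : H →ₗ[K] M →ₗ[K] M) : Prop where
  left_mul : ∀ (ξ ζ : H) (P : M), L (ξ * ζ) P = L ξ (L ζ P)
  left_one : ∀ P : M, L 1 P = P
  right_mul : ∀ (ξ ζ : H) (P : M), Rm (ξ * ζ) P = Rm ζ (Rm ξ P)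
  right_one : ∀ P : M, Rm 1 P = P
  commute : ∀ (ξ ζ : H) (P : M), L ξ (Rm ζ P) = Rm ζ (L ξ P)
  assoc1 : ∀ (ξ : H) (P Q : M), Rm ξ (m P Q) = m P (Rm ξ Q)
  assoc2 : ∀ (ξ : H) (P Q : M), m (Rm ξ P) Q = m P (L ξ Q)
  assoc3 : ∀ (ξ : H) (P Q : M), L ξ (m P Q) = m (L ξ P) Q

/-- The `H`-adjoint action `ξ ▶ P = ξ₁ P S(ξ₂)`. -/
def adjAct (L Rm : H →ₗ[K] M →ₗ[K] M) : H →ₗ[K] M →ₗ[K] M :=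
  twistEnd K H L (Rm ∘ₗ SH K H) ∘ₗ ΔH K H

/-- The deformation map `D_F(P) = (f̄^α ▶ P) f̄_α`. -/
def DF (Finv : H ⊗[K] H) (L Rm : H →ₗ[K] M →ₗ[K] M) : M →ₗ[K] M :=
  twistEnd K H Rm (adjAct K H L Rm) (TensorProduct.comm K H H Finv)

/-- The star product `P ⋆ Q = (f̄^α ▶ P)(f̄_α ▶ Q)` on `𝔸`. -/
def starAlg (Finv : H ⊗[K] H) (m : M →ₗ[K] M →ₗ[K] M) (L Rm : H →ₗ[K] M →ₗ[K] M) :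
    M →ₗ[K] M →ₗ[K] M :=
  sw K H Finv (adjAct K H L Rm) (adjAct K H L Rm) m


/-- The `H^F`-adjoint action `ξ ▶_F P = ξ_{1_F} P S^F(ξ_{2_F})`. -/
def adjActF (F Finv : H ⊗[K] H) (L Rm : H →ₗ[K] M →ₗ[K] M) : H →ₗ[K] M →ₗ[K] M :=
  twistEnd K H L (Rm ∘ₗ twistAntipode K H F Finv) ∘ₗ twistComul K H F Finv

@[simp] lemma muH_tmul (x y : H) : muH K H (x ⊗ₜ[K] y) = x * y := rfl

lemma comul_one' : ΔH K H 1 = (1:H) ⊗ₜ[K] (1:H) := by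
  rw [ΔH, Bialgebra.comul_one]; rfl

lemma comul_mul' (x y : H) : ΔH K H (x * y) = ΔH K H x * ΔH K H y := by
  rw [ΔH, Bialgebra.comul_mul]

-- x ⊗ y ↦ x * S y
def nu0 : H ⊗[K] H →ₗ[K] H := muH K H ∘ₗ (SH K H).lTensor H
-- x ⊗ y ↦ S x * y
def nu1 : H ⊗[K] H →ₗ[K] H := muH K H ∘ₗ (SH K H).rTensor H

@[simp] lemma nu0_tmul (x y : H) : nu0 K H (x ⊗ₜ[K] y) = x * SH K H y := by
  simp [nu0, muH]

@[simp] lemma nu1_tmul (x y : H) : nu1 K H (x ⊗ₜ[K] y) = SH K H x * y := by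
  simp [nu1, muH]

lemma nu0_comul (x : H) : nu0 K H (ΔH K H x) = εH K H x • 1 := by
  have h := HopfAlgebra.mul_antipode_lTensor_comul_apply (R := K) (A := H) x
  simpa [nu0, muH, SH, ΔH, εH, Algebra.smul_def] using h

lemma nu1_comul (x : H) : nu1 K H (ΔH K H x) = εH K H x • 1 := by
  have h := HopfAlgebra.mul_antipode_rTensor_comul_apply (R := K) (A := H) x
  simpa [nu1, muH, SH, ΔH, εH, Algebra.smul_def] using h

@[simp] lemma antipode_one : SH K H 1 = 1 := by
  have h := nu0_comul K H 1
  rw [comul_one'] at h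
  simp only [nu0_tmul, one_mul, εH, Bialgebra.counit_one, one_smul] at h
  exact h

-- (x₂ ⊗ x₃) ⊗ c ↦ x₂ * (c * S x₃)
def omg : (H ⊗[K] H) ⊗[K] H →ₗ[K] H :=
  muH K H ∘ₗ
    (LinearMap.lTensor H (muH K H ∘ₗ (TensorProduct.comm K H H).toLinearMap ∘ₗ (SH K H).rTensor H)) ∘ₗ
    (TensorProduct.assoc K H H H).toLinearMap

@[simp] lemma omg_tmul (x y c : H) : omg K H ((x ⊗ₜ[K] y) ⊗ₜ[K] c) = x * (c * SH K H y) := by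
  simp [omg, muH]

def Psi : (H ⊗[K] (H ⊗[K] H)) ⊗[K] (H ⊗[K] (H ⊗[K] H)) →ₗ[K] H :=
  muH K H ∘ₗ
    (TensorProduct.map (SH K H ∘ₗ muH K H) (omg K H)) ∘ₗ
    (TensorProduct.tensorTensorTensorComm K H (H ⊗[K] H) H H).toLinearMap ∘ₗ
    (LinearMap.lTensor (H ⊗[K] (H ⊗[K] H)) (LinearMap.lTensor H (nu0 K H)))

@[simp] lemma Psi_tmul (x₁ y₁ : H) (p q : H ⊗[K] H) :
    Psi K H ((x₁ ⊗ₜ[K] p) ⊗ₜ[K] (y₁ ⊗ₜ[K] q)) =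
      SH K H (x₁ * y₁) * omg K H (p ⊗ₜ[K] nu0 K H q) := by
  simp [Psi, muH]

lemma omg_one (q : H ⊗[K] H) : omg K H (q ⊗ₜ[K] (1:H)) = nu0 K H q := by
  induction q using TensorProduct.induction_on with
  | zero => simp
  | tmul u v => simp
  | add p q hp hq => simp [TensorProduct.add_tmul, hp, hq]

theorem antipode_mul (a b : H) : SH K H (a * b) = SH K H b * SH K H a := by
  have collapse_b : (LinearMap.lTensor H (nu0 K H)) (LinearMap.lTensor H (ΔH K H) (ΔH K H b))
      = b ⊗ₜ[K] (1 : H) := by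
    rw [← LinearMap.lTensor_comp_apply]
    have h : (nu0 K H ∘ₗ ΔH K H) = (Algebra.linearMap K H) ∘ₗ εH K H := by
      ext x; simp [nu0_comul, Algebra.smul_def]
    rw [h, LinearMap.lTensor_comp_apply]
    have h2 : (εH K H).lTensor H (ΔH K H b) = b ⊗ₜ[K] (1 : K) :=
      Coalgebra.lTensor_counit_comul (R := K) b
    rw [h2]
    simp
  -- chain (i): M = S (a*b)
  have chain1 : Psi K H ((LinearMap.lTensor H (ΔH K H) (ΔH K H a)) ⊗ₜ[K]
      (LinearMap.lTensor H (ΔH K H) (ΔH K H b))) = SH K H (a * b) := by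
    have step : ∀ x : H ⊗[K] (H ⊗[K] H),
        Psi K H (x ⊗ₜ[K] (LinearMap.lTensor H (ΔH K H) (ΔH K H b))) =
        muH K H ((TensorProduct.map (SH K H ∘ₗ muH K H) (omg K H))
          ((TensorProduct.tensorTensorTensorComm K H (H ⊗[K] H) H H)
            (x ⊗ₜ[K] (b ⊗ₜ[K] (1 : H))))) := by
      intro x
      simp only [Psi, LinearMap.coe_comp, Function.comp_apply, LinearEquiv.coe_coe,
        LinearMap.lTensor_tmul, collapse_b]
    rw [step]
    have step2 : ∀ u : H ⊗[K] H,
        muH K H ((TensorProduct.map (SH K H ∘ₗ muH K H) (omg K H))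
          ((TensorProduct.tensorTensorTensorComm K H (H ⊗[K] H) H H)
            ((LinearMap.lTensor H (ΔH K H) u) ⊗ₜ[K] (b ⊗ₜ[K] (1 : H))))) =
        SH K H ((TensorProduct.rid K H) ((εH K H).lTensor H u) * b) := by
      intro u
      induction u using TensorProduct.induction_on with
      | zero => simp
      | tmul x y =>
          simp only [LinearMap.lTensor_tmul, tensorTensorTensorComm_tmul,
            TensorProduct.map_tmul, LinearMap.coe_comp, Function.comp_apply,
            muH_tmul, omg_one, nu0_comul, TensorProduct.rid_tmul]
          simp [mul_smul_comm, smul_mul_assoc]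
      | add p q hp hq =>
          simp only [map_add, TensorProduct.add_tmul, add_mul] at *
          rw [hp, hq]
    rw [step2]
    have h2 : (εH K H).lTensor H (ΔH K H a) = a ⊗ₜ[K] (1 : K) :=
      Coalgebra.lTensor_counit_comul (R := K) a
    rw [h2]
    simp
  -- chain (ii): M = S b * S a
  have chain2 : Psi K H ((LinearMap.lTensor H (ΔH K H) (ΔH K H a)) ⊗ₜ[K]
      (LinearMap.lTensor H (ΔH K H) (ΔH K H b))) = SH K H b * SH K H a := by
    have coa : ∀ x : H, (LinearMap.lTensor H (ΔH K H)) (ΔH K H x)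
        = (TensorProduct.assoc K H H H) ((LinearMap.rTensor H (ΔH K H)) (ΔH K H x)) := by
      intro x
      exact (Coalgebra.coassoc_apply x).symm
    rw [coa a, coa b]
    -- P5 : for all u v q s
    have P5 : ∀ (u v : H ⊗[K] H) (q s : H),
        Psi K H (((TensorProduct.assoc K H H H) (u ⊗ₜ[K] q)) ⊗ₜ[K]
          ((TensorProduct.assoc K H H H) (v ⊗ₜ[K] s))) =
        nu1 K H (u * v) * (SH K H s * SH K H q) := by
      intro u v q s
      induction u using TensorProduct.induction_on with
      | zero => simp
      | tmul u₁ u₂ =>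
          induction v using TensorProduct.induction_on with
          | zero => simp
          | tmul v₁ v₂ =>
              simp only [TensorProduct.assoc_tmul, Psi_tmul, nu0_tmul, omg_tmul,
                Algebra.TensorProduct.tmul_mul_tmul, nu1_tmul]
              simp only [mul_assoc]
          | add p q' hp hq' =>
              simp only [TensorProduct.add_tmul, TensorProduct.tmul_add, map_add,
                mul_add, add_mul] at *
              rw [hp, hq']
      | add p q' hp hq' =>
          simp only [TensorProduct.add_tmul, TensorProduct.tmul_add, map_add,
            mul_add, add_mul] at *
          rw [hp, hq']
    -- P6 : double induction over z w
    have P6 : ∀ z w : H ⊗[K] H,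
        Psi K H (((TensorProduct.assoc K H H H) ((LinearMap.rTensor H (ΔH K H)) z)) ⊗ₜ[K]
          ((TensorProduct.assoc K H H H) ((LinearMap.rTensor H (ΔH K H)) w))) =
        (SH K H ((TensorProduct.lid K H) ((εH K H).rTensor H w))) *
        (SH K H ((TensorProduct.lid K H) ((εH K H).rTensor H z))) := by
      intro z w
      induction z using TensorProduct.induction_on with
      | zero => simp
      | tmul p q =>
          induction w using TensorProduct.induction_on with
          | zero => simp
          | tmul r s =>
              rw [LinearMap.rTensor_tmul, LinearMap.rTensor_tmul, P5]
              rw [← comul_mul', nu1_comul]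
              simp only [LinearMap.rTensor_tmul, TensorProduct.lid_tmul, εH]
              rw [Bialgebra.counit_mul]
              simp only [smul_mul_assoc, mul_smul_comm, map_smul, mul_smul, one_mul]
          | add p' q' hp hq =>
              simp only [map_add, TensorProduct.tmul_add, TensorProduct.add_tmul,
                add_mul, mul_add] at *
              rw [hp, hq]
      | add p' q' hp hq =>
          simp only [map_add, TensorProduct.tmul_add, TensorProduct.add_tmul,
            add_mul, mul_add] at *
          rw [hp, hq]
    rw [P6]
    have hz : ∀ x : H, (TensorProduct.lid K H) ((εH K H).rTensor H (ΔH K H x)) = x := by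
      intro x
      have := Coalgebra.rTensor_counit_comul (R := K) x
      rw [εH, ΔH, this]
      simp
    rw [hz, hz]
  rw [← chain1, chain2]


/-! ### Part 2 : the algebra `H ⊗ Hᵐᵒᵖ` -/

def opL : H →ₗ[K] Hᵐᵒᵖ := (MulOpposite.opLinearEquiv K).toLinearMap

@[simp] lemma opL_apply (x : H) : opL K H x = MulOpposite.op x := rfl

/-- `ρ : H ⊗ H → H ⊗ Hᵐᵒᵖ`, `x ⊗ y ↦ x ⊗ op (S y)`. -/
def rho : H ⊗[K] H →ₗ[K] H ⊗[K] Hᵐᵒᵖ := LinearMap.lTensor H (opL K H ∘ₗ SH K H)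

@[simp] lemma rho_tmul (x y : H) :
    rho K H (x ⊗ₜ[K] y) = x ⊗ₜ[K] MulOpposite.op (SH K H y) := rfl

/-- `g : H → H ⊗ Hᵐᵒᵖ`, `y ↦ 1 ⊗ op y`. -/
def gB : H →ₗ[K] H ⊗[K] Hᵐᵒᵖ :=
  (Algebra.TensorProduct.includeRight (R := K) (A := H)).toLinearMap ∘ₗ opL K H

@[simp] lemma gB_apply (y : H) : gB K H y = (1:H) ⊗ₜ[K] MulOpposite.op y := rfl

/-- the adjoint-action element `ad ξ = ξ₁ ⊗ op (S ξ₂)`. -/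
def adB : H →ₗ[K] H ⊗[K] Hᵐᵒᵖ := rho K H ∘ₗ ΔH K H

lemma rho_mul (z w : H ⊗[K] H) : rho K H (z * w) = rho K H z * rho K H w := by
  induction z using TensorProduct.induction_on with
  | zero => simp
  | tmul a b =>
      induction w using TensorProduct.induction_on with
      | zero => simp
      | tmul c d =>
          simp only [Algebra.TensorProduct.tmul_mul_tmul, rho_tmul]
          rw [antipode_mul]
          simp [MulOpposite.op_mul]
      | add p q hp hq => simp only [mul_add, map_add, hp, hq]
  | add p q hp hq => simp only [add_mul, map_add, hp, hq]

lemma rho_one : rho K H 1 = 1 := by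
  rw [Algebra.TensorProduct.one_def, rho_tmul, antipode_one]
  rfl

lemma adB_mul (x y : H) : adB K H (x * y) = adB K H x * adB K H y := by
  simp only [adB, LinearMap.coe_comp, Function.comp_apply, comul_mul', rho_mul]

lemma adB_one : adB K H 1 = 1 := by
  simp only [adB, LinearMap.coe_comp, Function.comp_apply, comul_one']
  rw [← Algebra.TensorProduct.one_def, rho_one]

lemma gB_mul (y b : H) : gB K H (y * b) = gB K H b * gB K H y := by
  simp [Algebra.TensorProduct.tmul_mul_tmul]

/-- `Γ : H ⊗ H → H ⊗ Hᵐᵒᵖ`, `x ⊗ y ↦ x₁ ⊗ op (S(x₂) y)`. -/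
def Gam : H ⊗[K] H →ₗ[K] H ⊗[K] Hᵐᵒᵖ :=
  (LinearMap.lTensor H (opL K H ∘ₗ muH K H)) ∘ₗ
    (TensorProduct.assoc K H H H).toLinearMap ∘ₗ
    (LinearMap.rTensor H ((LinearMap.lTensor H (SH K H)) ∘ₗ ΔH K H))

lemma Gam_aux (u : H ⊗[K] H) (y : H) :
    (LinearMap.lTensor H (opL K H ∘ₗ muH K H)) ((TensorProduct.assoc K H H H) (u ⊗ₜ[K] y)) =
      gB K H y * (LinearMap.lTensor H (opL K H)) u := by
  induction u using TensorProduct.induction_on with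
  | zero => simp
  | tmul u₁ u₂ =>
      simp [Algebra.TensorProduct.tmul_mul_tmul, MulOpposite.op_mul]
  | add p q hp hq => simp only [TensorProduct.add_tmul, map_add, mul_add, hp, hq]

lemma adB_eq (x : H) :
    adB K H x = (LinearMap.lTensor H (opL K H))
      ((LinearMap.lTensor H (SH K H)) (ΔH K H x)) := by
  simp only [adB, rho, LinearMap.coe_comp, Function.comp_apply, LinearMap.lTensor_comp,
    LinearMap.comp_apply]

lemma Gam_tmul (x y : H) : Gam K H (x ⊗ₜ[K] y) = gB K H y * adB K H x := by
  rw [adB_eq]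
  simp only [Gam, LinearMap.coe_comp, Function.comp_apply, LinearEquiv.coe_coe,
    LinearMap.rTensor_tmul, Gam_aux]

lemma G1 (z : H ⊗[K] H) (ξ : H) :
    Gam K H (z * (ξ ⊗ₜ[K] (1:H))) = Gam K H z * adB K H ξ := by
  induction z using TensorProduct.induction_on with
  | zero => simp
  | tmul x y =>
      simp only [Algebra.TensorProduct.tmul_mul_tmul, mul_one, Gam_tmul, adB_mul, mul_assoc]
  | add p q hp hq => simp only [add_mul, map_add, hp, hq]

lemma G3 (z : H ⊗[K] H) (b : H) :
    Gam K H (z * ((1:H) ⊗ₜ[K] b)) = gB K H b * Gam K H z := by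
  induction z using TensorProduct.induction_on with
  | zero => simp
  | tmul x y =>
      simp only [Algebra.TensorProduct.tmul_mul_tmul, mul_one, Gam_tmul, gB_mul, mul_assoc]
  | add p q hp hq => simp only [add_mul, map_add, mul_add, hp, hq]

lemma G4 (a : H) : Gam K H (ΔH K H a) = a ⊗ₜ[K] (1 : Hᵐᵒᵖ) := by
  have nat1 : (TensorProduct.assoc K H H H).toLinearMap ∘ₗ
      (LinearMap.rTensor H (LinearMap.lTensor H (SH K H))) =
      (LinearMap.lTensor H (LinearMap.rTensor H (SH K H))) ∘ₗ
        (TensorProduct.assoc K H H H).toLinearMap := by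
    apply TensorProduct.ext_threefold
    intro x y z
    simp
  have h0 : Gam K H (ΔH K H a) =
      (LinearMap.lTensor H (opL K H ∘ₗ muH K H))
        ((TensorProduct.assoc K H H H)
          ((LinearMap.rTensor H (LinearMap.lTensor H (SH K H)))
            ((LinearMap.rTensor H (ΔH K H)) (ΔH K H a)))) := by
    simp only [Gam, LinearMap.coe_comp, Function.comp_apply, LinearEquiv.coe_coe,
      LinearMap.rTensor_comp, LinearMap.comp_apply]
  have h1 := LinearMap.congr_fun nat1 ((LinearMap.rTensor H (ΔH K H)) (ΔH K H a))
  simp only [LinearMap.coe_comp, Function.comp_apply, LinearEquiv.coe_coe] at h1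
  have coas : (TensorProduct.assoc K H H H) ((LinearMap.rTensor H (ΔH K H)) (ΔH K H a)) =
      (LinearMap.lTensor H (ΔH K H)) (ΔH K H a) := Coalgebra.coassoc_apply a
  rw [h0, h1, coas, ← LinearMap.lTensor_comp_apply, ← LinearMap.lTensor_comp_apply]
  have key : ((opL K H ∘ₗ muH K H) ∘ₗ LinearMap.rTensor H (SH K H)) ∘ₗ ΔH K H =
      opL K H ∘ₗ (Algebra.linearMap K H ∘ₗ εH K H) := by
    rw [LinearMap.comp_assoc, LinearMap.comp_assoc]
    congr 1
    exact HopfAlgebra.mul_antipode_rTensor_comul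
  rw [key, LinearMap.lTensor_comp_apply, LinearMap.lTensor_comp_apply]
  have h2 : (εH K H).lTensor H (ΔH K H a) = a ⊗ₜ[K] (1 : K) :=
    Coalgebra.lTensor_counit_comul (R := K) a
  rw [h2]
  simp

lemma G2 (a : H) (z : H ⊗[K] H) :
    Gam K H (ΔH K H a * z) = (a ⊗ₜ[K] (1 : Hᵐᵒᵖ)) * Gam K H z := by
  induction z using TensorProduct.induction_on with
  | zero => simp
  | tmul x y =>
      have hxy : (x ⊗ₜ[K] y : H ⊗[K] H) = (x ⊗ₜ[K] (1:H)) * ((1:H) ⊗ₜ[K] y) := by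
        simp [Algebra.TensorProduct.tmul_mul_tmul]
      rw [hxy, ← mul_assoc, G3, G1, G4, ← hxy, Gam_tmul, ← mul_assoc, ← mul_assoc]
      congr 1
      simp [Algebra.TensorProduct.tmul_mul_tmul]
  | add p q hp hq => simp only [mul_add, map_add, hp, hq]


/-! ### Part 3 : consequences of the twist axioms -/

@[simp] lemma ins1_apply (z : H ⊗[K] H) : ins1 K H z = (1:H) ⊗ₜ[K] z := rfl

@[simp] lemma ins3_tmul (x y : H) : ins3 K H (x ⊗ₜ[K] y) = x ⊗ₜ[K] (y ⊗ₜ[K] (1:H)) := rfl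

@[simp] lemma comulRight_tmul (x y : H) :
    comulRight K H (x ⊗ₜ[K] y) = x ⊗ₜ[K] ΔH K H y := rfl

@[simp] lemma comulLeft_tmul (x y : H) :
    comulLeft K H (x ⊗ₜ[K] y) = (TensorProduct.assoc K H H H) ((ΔH K H x) ⊗ₜ[K] y) := rfl

@[simp] lemma counitLeft_tmul (x y : H) :
    counitLeft K H (x ⊗ₜ[K] y) = εH K H x • y := by
  simp [counitLeft]

@[simp] lemma counitRight_tmul (x y : H) :
    counitRight K H (x ⊗ₜ[K] y) = εH K H y • x := by
  simp [counitRight]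

lemma assoc_mul (z w : (H ⊗[K] H) ⊗[K] H) :
    (TensorProduct.assoc K H H H) (z * w) =
      (TensorProduct.assoc K H H H) z * (TensorProduct.assoc K H H H) w :=
  map_mul (Algebra.TensorProduct.assoc K K K H H H) z w

lemma ins1_mul (z w : H ⊗[K] H) : ins1 K H (z * w) = ins1 K H z * ins1 K H w := by
  simp [Algebra.TensorProduct.tmul_mul_tmul]

lemma ins1_one : ins1 K H 1 = 1 := by
  rw [ins1_apply, Algebra.TensorProduct.one_def (A := H)]
  rfl

lemma ins3_mul (z w : H ⊗[K] H) : ins3 K H (z * w) = ins3 K H z * ins3 K H w := by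
  induction z using TensorProduct.induction_on with
  | zero => simp
  | tmul a b =>
      induction w using TensorProduct.induction_on with
      | zero => simp
      | tmul c d => simp [Algebra.TensorProduct.tmul_mul_tmul]
      | add p q hp hq => simp only [mul_add, map_add, hp, hq]
  | add p q hp hq => simp only [add_mul, map_add, hp, hq]

lemma ins3_one : ins3 K H 1 = 1 := by
  rw [Algebra.TensorProduct.one_def (A := H), ins3_tmul]
  rw [show ((1:H) ⊗ₜ[K] ((1:H) ⊗ₜ[K] (1:H))) = ((1:H) ⊗ₜ[K] (1 : H ⊗[K] H)) from by
    rw [Algebra.TensorProduct.one_def (A := H)]]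
  exact (Algebra.TensorProduct.one_def).symm

lemma comulLeft_mul (z w : H ⊗[K] H) :
    comulLeft K H (z * w) = comulLeft K H z * comulLeft K H w := by
  induction z using TensorProduct.induction_on with
  | zero => simp
  | tmul a b =>
      induction w using TensorProduct.induction_on with
      | zero => simp
      | tmul c d =>
          simp only [Algebra.TensorProduct.tmul_mul_tmul, comulLeft_tmul, comul_mul',
            ← assoc_mul]
      | add p q hp hq => simp only [mul_add, map_add, hp, hq]
  | add p q hp hq => simp only [add_mul, map_add, hp, hq]

lemma comulLeft_one : comulLeft K H 1 = 1 := by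
  rw [Algebra.TensorProduct.one_def (A := H), comulLeft_tmul, comul_one']
  rw [show (TensorProduct.assoc K H H H) (((1:H) ⊗ₜ[K] (1:H)) ⊗ₜ[K] (1:H)) =
    (1:H) ⊗ₜ[K] ((1:H) ⊗ₜ[K] (1:H)) from rfl]
  rw [show ((1:H) ⊗ₜ[K] ((1:H) ⊗ₜ[K] (1:H))) = ((1:H) ⊗ₜ[K] (1 : H ⊗[K] H)) from by
    rw [Algebra.TensorProduct.one_def (A := H)]]
  exact (Algebra.TensorProduct.one_def).symm

lemma comulRight_mul (z w : H ⊗[K] H) :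
    comulRight K H (z * w) = comulRight K H z * comulRight K H w := by
  induction z using TensorProduct.induction_on with
  | zero => simp
  | tmul a b =>
      induction w using TensorProduct.induction_on with
      | zero => simp
      | tmul c d => simp [Algebra.TensorProduct.tmul_mul_tmul, comul_mul']
      | add p q hp hq => simp only [mul_add, map_add, hp, hq]
  | add p q hp hq => simp only [add_mul, map_add, hp, hq]

lemma comulRight_one : comulRight K H 1 = 1 := by
  rw [Algebra.TensorProduct.one_def (A := H), comulRight_tmul, comul_one']
  rw [show ((1:H) ⊗ₜ[K] ((1:H) ⊗ₜ[K] (1:H))) = ((1:H) ⊗ₜ[K] (1 : H ⊗[K] H)) from by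
    rw [Algebra.TensorProduct.one_def (A := H)]]
  exact (Algebra.TensorProduct.one_def).symm

lemma counitLeft_mul (z w : H ⊗[K] H) :
    counitLeft K H (z * w) = counitLeft K H z * counitLeft K H w := by
  induction z using TensorProduct.induction_on with
  | zero => simp
  | tmul a b =>
      induction w using TensorProduct.induction_on with
      | zero => simp
      | tmul c d =>
          simp only [Algebra.TensorProduct.tmul_mul_tmul, counitLeft_tmul, εH,
            Bialgebra.counit_mul, mul_smul, smul_mul_assoc, mul_smul_comm]
          exact smul_comm _ _ _
      | add p q hp hq => simp only [mul_add, map_add, hp, hq]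
  | add p q hp hq => simp only [add_mul, map_add, hp, hq]

lemma counitLeft_one : counitLeft K H 1 = 1 := by
  rw [Algebra.TensorProduct.one_def (A := H), counitLeft_tmul]
  simp [εH]

lemma counitRight_mul (z w : H ⊗[K] H) :
    counitRight K H (z * w) = counitRight K H z * counitRight K H w := by
  induction z using TensorProduct.induction_on with
  | zero => simp
  | tmul a b =>
      induction w using TensorProduct.induction_on with
      | zero => simp
      | tmul c d =>
          simp only [Algebra.TensorProduct.tmul_mul_tmul, counitRight_tmul, εH,
            Bialgebra.counit_mul, mul_smul, smul_mul_assoc, mul_smul_comm]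
          exact smul_comm _ _ _
      | add p q hp hq => simp only [mul_add, map_add, hp, hq]
  | add p q hp hq => simp only [add_mul, map_add, hp, hq]

lemma counitRight_one : counitRight K H 1 = 1 := by
  rw [Algebra.TensorProduct.one_def (A := H), counitRight_tmul]
  simp [εH]

lemma counitRight_comul (ξ : H) : counitRight K H (ΔH K H ξ) = ξ := by
  have h2 : (εH K H).lTensor H (ΔH K H ξ) = ξ ⊗ₜ[K] (1 : K) :=
    Coalgebra.lTensor_counit_comul (R := K) ξ
  simp only [counitRight, LinearMap.coe_comp, Function.comp_apply, LinearEquiv.coe_coe, h2]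
  simp

section TwistFacts

variable (F Finv : H ⊗[K] H)

lemma twistComul_apply (ξ : H) :
    twistComul K H F Finv ξ = F * ΔH K H ξ * Finv := by
  simp only [twistComul, LinearMap.coe_comp, Function.comp_apply, LinearMap.mulLeft_apply,
    LinearMap.mulRight_apply, mul_assoc]

lemma twistAntipode_apply (s : H) :
    twistAntipode K H F Finv s = chi K H F * SH K H s * chiInv K H Finv := by
  simp only [twistAntipode, LinearMap.coe_comp, Function.comp_apply, LinearMap.mulLeft_apply,
    LinearMap.mulRight_apply, mul_assoc]

variable (hF : IsTwist K H F Finv)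
include hF

lemma tw2 (ξ : H) : Finv * twistComul K H F Finv ξ = ΔH K H ξ * Finv := by
  rw [twistComul_apply, ← mul_assoc, ← mul_assoc, hF.inv_mul, one_mul]

lemma ΔF_mul (x y : H) : twistComul K H F Finv (x * y) =
    twistComul K H F Finv x * twistComul K H F Finv y := by
  simp only [twistComul_apply, comul_mul']
  calc F * (ΔH K H x * ΔH K H y) * Finv
      = F * ΔH K H x * (Finv * F) * ΔH K H y * Finv := by
        rw [hF.inv_mul]; noncomm_ring
    _ = F * ΔH K H x * Finv * (F * ΔH K H y * Finv) := by noncomm_ring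

lemma counitRight_F_inv : counitRight K H Finv = 1 := by
  have h := counitRight_mul K H F Finv
  rw [hF.mul_inv, counitRight_one, hF.counit_right, one_mul] at h
  exact h.symm

lemma counitLeft_F_inv : counitLeft K H Finv = 1 := by
  have h := counitLeft_mul K H Finv F
  rw [hF.inv_mul, counitLeft_one, hF.counit_left, mul_one] at h
  exact h.symm

/-- counit property of the twisted coproduct -/
lemma counitRightF (ξ : H) : counitRight K H (twistComul K H F Finv ξ) = ξ := by
  rw [twistComul_apply, counitRight_mul, counitRight_mul, hF.counit_right,
    counitRight_F_inv K H F Finv hF, counitRight_comul, one_mul, mul_one]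

/-- coassociativity of the twisted coproduct -/
lemma coassocF (ξ : H) :
    (TensorProduct.assoc K H H H)
        ((twistComul K H F Finv).rTensor H (twistComul K H F Finv ξ)) =
      (twistComul K H F Finv).lTensor H (twistComul K H F Finv ξ) := by
  have rT_eq : ∀ w : H ⊗[K] H, (twistComul K H F Finv).rTensor H w =
      (F ⊗ₜ[K] (1:H)) * ((ΔH K H).rTensor H w) * (Finv ⊗ₜ[K] (1:H)) := by
    intro w
    induction w using TensorProduct.induction_on with
    | zero => simp
    | tmul x y =>
        simp only [LinearMap.rTensor_tmul, twistComul_apply,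
          Algebra.TensorProduct.tmul_mul_tmul, one_mul, mul_one]
    | add p q hp hq => simp only [map_add, hp, hq, mul_add, add_mul]
  have lT_eq : ∀ w : H ⊗[K] H, (twistComul K H F Finv).lTensor H w =
      ((1:H) ⊗ₜ[K] F) * ((ΔH K H).lTensor H w) * ((1:H) ⊗ₜ[K] Finv) := by
    intro w
    induction w using TensorProduct.induction_on with
    | zero => simp
    | tmul x y =>
        simp only [LinearMap.lTensor_tmul, twistComul_apply,
          Algebra.TensorProduct.tmul_mul_tmul, one_mul, mul_one]
    | add p q hp hq => simp only [map_add, hp, hq, mul_add, add_mul]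
  have assoc_e3 : ∀ z : H ⊗[K] H,
      (TensorProduct.assoc K H H H) (z ⊗ₜ[K] (1:H)) = ins3 K H z := by
    intro z
    induction z using TensorProduct.induction_on with
    | zero => simp
    | tmul x y => rfl
    | add p q hp hq => simp only [TensorProduct.add_tmul, map_add, hp, hq]
  -- abbreviations
  have hcl : ∀ w : H ⊗[K] H, (TensorProduct.assoc K H H H) ((ΔH K H).rTensor H w)
      = comulLeft K H w := fun w => rfl
  have hcr : ∀ w : H ⊗[K] H, (ΔH K H).lTensor H w = comulRight K H w := fun w => rfl
  rw [rT_eq, lT_eq, assoc_mul, assoc_mul, assoc_e3, assoc_e3, hcl, hcr]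
  rw [show twistComul K H F Finv ξ = F * ΔH K H ξ * Finv from twistComul_apply K H F Finv ξ]
  rw [comulLeft_mul, comulLeft_mul, comulRight_mul, comulRight_mul]
  -- the middle term agrees by coassociativity of Δ
  have hmid : comulLeft K H (ΔH K H ξ) = comulRight K H (ΔH K H ξ) := by
    exact Coalgebra.coassoc_apply ξ
  -- now the inverse juggling
  set X1 := ins3 K H F * comulLeft K H F with hX1
  set X2 := ins1 K H F * comulRight K H F with hX2
  set Y := comulLeft K H Finv * ins3 K H Finv with hY
  set Z := comulRight K H Finv * ins1 K H Finv with hZ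
  have hcoc : X1 = X2 := hF.cocycle
  have hX1Y : X1 * Y = 1 := by
    rw [hX1, hY]
    calc ins3 K H F * comulLeft K H F * (comulLeft K H Finv * ins3 K H Finv)
        = ins3 K H F * (comulLeft K H F * comulLeft K H Finv) * ins3 K H Finv := by
          noncomm_ring
      _ = 1 := by
          rw [← comulLeft_mul, hF.mul_inv, comulLeft_one, mul_one, ← ins3_mul,
            hF.mul_inv, ins3_one]
  have hYX1 : Y * X1 = 1 := by
    rw [hX1, hY]
    calc comulLeft K H Finv * ins3 K H Finv * (ins3 K H F * comulLeft K H F)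
        = comulLeft K H Finv * (ins3 K H Finv * ins3 K H F) * comulLeft K H F := by
          noncomm_ring
      _ = 1 := by
          rw [← ins3_mul, hF.inv_mul, ins3_one, mul_one, ← comulLeft_mul,
            hF.inv_mul, comulLeft_one]
  have hX2Z : X2 * Z = 1 := by
    rw [hX2, hZ]
    calc ins1 K H F * comulRight K H F * (comulRight K H Finv * ins1 K H Finv)
        = ins1 K H F * (comulRight K H F * comulRight K H Finv) * ins1 K H Finv := by
          noncomm_ring
      _ = 1 := by
          rw [← comulRight_mul, hF.mul_inv, comulRight_one, mul_one, ← ins1_mul,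
            hF.mul_inv, ins1_one]
  have hYZ : Y = Z := by
    have h1 : Y * (X1 * Z) = Z := by rw [← mul_assoc, hYX1, one_mul]
    rw [← h1, hcoc, hX2Z, mul_one]
  calc ins3 K H F * (comulLeft K H F * comulLeft K H (ΔH K H ξ) * comulLeft K H Finv) *
        ins3 K H Finv
      = X1 * comulLeft K H (ΔH K H ξ) * Y := by rw [hX1, hY]; noncomm_ring
    _ = X2 * comulRight K H (ΔH K H ξ) * Z := by rw [hcoc, hYZ, hmid]
    _ = ins1 K H F * (comulRight K H F * comulRight K H (ΔH K H ξ) * comulRight K H Finv) *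
        ins1 K H Finv := by rw [hX2, hZ]; noncomm_ring

end TwistFacts


/-! ### Part 4 : the twisted antipode -/

section TwistAntipodeFacts

variable (F Finv : H ⊗[K] H)

lemma chi_eq : chi K H F = nu0 K H F := rfl
lemma chiInv_eq : chiInv K H Finv = nu1 K H Finv := rfl

lemma nu0_one' : nu0 K H (1 : H ⊗[K] H) = 1 := by
  rw [Algebra.TensorProduct.one_def]
  simp

lemma B7 (z : H ⊗[K] H) :
    muH K H ((twistAntipode K H F Finv).lTensor H z) =
      nu0 K H (z * (chi K H F ⊗ₜ[K] (1:H))) * chiInv K H Finv := by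
  induction z using TensorProduct.induction_on with
  | zero => simp
  | tmul x y =>
      simp only [LinearMap.lTensor_tmul, muH_tmul, twistAntipode_apply,
        Algebra.TensorProduct.tmul_mul_tmul, mul_one, nu0_tmul, mul_assoc]
  | add p q hp hq => simp only [map_add, add_mul, hp, hq]

lemma B3 (a b : H) (w : H ⊗[K] H) :
    nu0 K H ((a ⊗ₜ[K] b) * w) = a * nu0 K H w * SH K H b := by
  induction w using TensorProduct.induction_on with
  | zero => simp
  | tmul u v =>
      simp only [Algebra.TensorProduct.tmul_mul_tmul, nu0_tmul, antipode_mul, mul_assoc]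
  | add p q hp hq => simp only [mul_add, map_add, add_mul, hp, hq]

lemma B3' (z w : H ⊗[K] H) :
    nu0 K H (z * w) = nu0 K H (z * (nu0 K H w ⊗ₜ[K] (1:H))) := by
  induction z using TensorProduct.induction_on with
  | zero => simp
  | tmul a b =>
      rw [B3, B3]
      simp
  | add p q hp hq => simp only [add_mul, map_add, hp, hq]

lemma theta_mul (p : H ⊗[K] H) (u v : H) :
    nu1 K H (p * (u ⊗ₜ[K] v)) = SH K H u * nu1 K H p * v := by
  induction p using TensorProduct.induction_on with
  | zero => simp
  | tmul p₁ p₂ =>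
      simp only [Algebra.TensorProduct.tmul_mul_tmul, nu1_tmul, antipode_mul, mul_assoc]
  | add p q hp hq => simp only [add_mul, map_add, mul_add, hp, hq]

def kap : H ⊗[K] (H ⊗[K] H) →ₗ[K] H := muH K H ∘ₗ LinearMap.lTensor H (nu1 K H)

@[simp] lemma kap_tmul (x : H) (w : H ⊗[K] H) :
    kap K H (x ⊗ₜ[K] w) = x * nu1 K H w := by
  simp [kap]

lemma S2 (a b d : H) (q : H ⊗[K] H) :
    kap K H ((a ⊗ₜ[K] ΔH K H b) * (TensorProduct.assoc K H H H) (q ⊗ₜ[K] d)) =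
      εH K H b • (a * nu0 K H q * d) := by
  induction q using TensorProduct.induction_on with
  | zero => simp
  | tmul q₁ q₂ =>
      rw [show (TensorProduct.assoc K H H H) ((q₁ ⊗ₜ[K] q₂) ⊗ₜ[K] d)
        = q₁ ⊗ₜ[K] (q₂ ⊗ₜ[K] d) from rfl]
      rw [Algebra.TensorProduct.tmul_mul_tmul, kap_tmul, theta_mul, nu1_comul]
      simp only [nu0_tmul, mul_smul_comm, smul_mul_assoc, mul_one, one_mul, mul_assoc]
  | add p q hp hq =>
      simp only [TensorProduct.add_tmul, map_add, mul_add, add_mul, smul_add, hp, hq]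

lemma B5b (z w : H ⊗[K] H) :
    kap K H (comulRight K H z * comulLeft K H w) =
      counitRight K H z * counitLeft K H w := by
  induction z using TensorProduct.induction_on with
  | zero => simp
  | tmul a b =>
      induction w using TensorProduct.induction_on with
      | zero => simp
      | tmul c d =>
          rw [comulRight_tmul, comulLeft_tmul, S2, nu0_comul, counitRight_tmul,
            counitLeft_tmul]
          simp only [mul_smul_comm, smul_mul_assoc, mul_one, smul_smul]
          rw [mul_comm (εH K H b) (εH K H c), mul_smul, smul_comm]
      | add p q hp hq => simp only [map_add, mul_add, hp, hq]
  | add p q hp hq => simp only [map_add, add_mul, hp, hq]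

lemma kap_ins (z w : H ⊗[K] H) :
    kap K H (ins1 K H z * ins3 K H w) = nu0 K H w * nu1 K H z := by
  induction z using TensorProduct.induction_on with
  | zero => simp
  | tmul a b =>
      induction w using TensorProduct.induction_on with
      | zero => simp
      | tmul c d =>
          rw [ins1_apply, ins3_tmul, Algebra.TensorProduct.tmul_mul_tmul,
            Algebra.TensorProduct.tmul_mul_tmul, kap_tmul, nu1_tmul, nu0_tmul]
          simp only [one_mul, mul_one, nu1_tmul, antipode_mul, mul_assoc]
      | add p q hp hq => simp only [map_add, mul_add, add_mul, hp, hq]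
  | add p q hp hq => simp only [map_add, mul_add, add_mul, hp, hq]

variable (hF : IsTwist K H F Finv)
include hF

lemma cocycle_flip :
    ins1 K H Finv * ins3 K H F = comulRight K H F * comulLeft K H Finv := by
  have h1 : comulLeft K H F * comulLeft K H Finv = 1 := by
    rw [← comulLeft_mul, hF.mul_inv, comulLeft_one]
  have h2 : ins1 K H Finv * ins1 K H F = 1 := by
    rw [← ins1_mul, hF.inv_mul, ins1_one]
  calc ins1 K H Finv * ins3 K H F
      = ins1 K H Finv * (ins3 K H F * comulLeft K H F) * comulLeft K H Finv := by
        rw [mul_assoc (ins1 K H Finv), mul_assoc, h1, mul_one]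
    _ = ins1 K H Finv * (ins1 K H F * comulRight K H F) * comulLeft K H Finv := by
        rw [hF.cocycle]
    _ = comulRight K H F * comulLeft K H Finv := by
        rw [show ins1 K H Finv * (ins1 K H F * comulRight K H F)
          = (ins1 K H Finv * ins1 K H F) * comulRight K H F from (mul_assoc _ _ _).symm,
          h2, one_mul]

lemma chi_chiInv : chi K H F * chiInv K H Finv = 1 := by
  rw [chi_eq, chiInv_eq, ← kap_ins, cocycle_flip K H F Finv hF, B5b, hF.counit_right,
    counitLeft_F_inv K H F Finv hF, one_mul]

lemma w0 : nu0 K H (Finv * (chi K H F ⊗ₜ[K] (1:H))) = 1 := by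
  rw [chi_eq, ← B3', hF.inv_mul, nu0_one']

/-- antipode property of the twisted antipode -/
lemma nuSF (ξ : H) :
    muH K H ((twistAntipode K H F Finv).lTensor H (twistComul K H F Finv ξ)) =
      εH K H ξ • 1 := by
  rw [B7, twistComul_apply]
  rw [show F * ΔH K H ξ * Finv * (chi K H F ⊗ₜ[K] (1:H)) =
      (F * ΔH K H ξ) * (Finv * (chi K H F ⊗ₜ[K] (1:H))) from by rw [mul_assoc]]
  rw [B3', w0 K H F Finv hF]
  rw [show ((1:H) ⊗ₜ[K] (1:H)) = (1 : H ⊗[K] H) from (Algebra.TensorProduct.one_def).symm,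
    mul_one]
  rw [B3' K H F (ΔH K H ξ), nu0_comul]
  rw [show ((εH K H ξ • (1:H)) ⊗ₜ[K] (1:H)) = εH K H ξ • ((1:H) ⊗ₜ[K] (1:H)) from by
    rw [TensorProduct.smul_tmul']]
  rw [show ((1:H) ⊗ₜ[K] (1:H)) = (1 : H ⊗[K] H) from (Algebra.TensorProduct.one_def).symm]
  rw [mul_smul_comm, mul_one, map_smul, smul_mul_assoc, ← chi_eq, chi_chiInv K H F Finv hF]

end TwistAntipodeFacts


/-! ### Part 5 : assembly -/

section Assembly

variable (F Finv : H ⊗[K] H)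

lemma lmu_assoc (q : H ⊗[K] H) (c : H) :
    (LinearMap.lTensor H (muH K H)) ((TensorProduct.assoc K H H H) (q ⊗ₜ[K] c)) =
      q * ((1:H) ⊗ₜ[K] c) := by
  induction q using TensorProduct.induction_on with
  | zero => simp
  | tmul q₁ q₂ => simp [Algebra.TensorProduct.tmul_mul_tmul]
  | add p q hp hq => simp only [TensorProduct.add_tmul, map_add, add_mul, hp, hq]

lemma KW (hF : IsTwist K H F Finv) (ξ : H) :
    (LinearMap.lTensor H (muH K H)) ((TensorProduct.assoc K H H H)
      ((LinearMap.rTensor H (twistComul K H F Finv))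
        ((LinearMap.lTensor H (twistAntipode K H F Finv)) (twistComul K H F Finv ξ))))
    = ξ ⊗ₜ[K] (1:H) := by
  have comm1 : (LinearMap.rTensor H (twistComul K H F Finv))
      ((LinearMap.lTensor H (twistAntipode K H F Finv)) (twistComul K H F Finv ξ))
      = (LinearMap.lTensor (H ⊗[K] H) (twistAntipode K H F Finv))
        ((LinearMap.rTensor H (twistComul K H F Finv)) (twistComul K H F Finv ξ)) := by
    have e : (LinearMap.rTensor H (twistComul K H F Finv)) ∘ₗ
        (LinearMap.lTensor H (twistAntipode K H F Finv)) =
        (LinearMap.lTensor (H ⊗[K] H) (twistAntipode K H F Finv)) ∘ₗ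
          (LinearMap.rTensor H (twistComul K H F Finv)) := by
      rw [LinearMap.rTensor_comp_lTensor, LinearMap.lTensor_comp_rTensor]
    exact LinearMap.congr_fun e (twistComul K H F Finv ξ)
  have nat2 : ∀ t : (H ⊗[K] H) ⊗[K] H,
      (TensorProduct.assoc K H H H)
        ((LinearMap.lTensor (H ⊗[K] H) (twistAntipode K H F Finv)) t)
      = (LinearMap.lTensor H (LinearMap.lTensor H (twistAntipode K H F Finv)))
          ((TensorProduct.assoc K H H H) t) := by
    have e : (TensorProduct.assoc K H H H).toLinearMap ∘ₗ
        (LinearMap.lTensor (H ⊗[K] H) (twistAntipode K H F Finv)) =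
        (LinearMap.lTensor H (LinearMap.lTensor H (twistAntipode K H F Finv))) ∘ₗ
          (TensorProduct.assoc K H H H).toLinearMap := by
      apply TensorProduct.ext_threefold
      intro x y z
      simp
    intro t
    have := LinearMap.congr_fun e t
    simpa using this
  rw [comm1, nat2, coassocF K H F Finv hF]
  have hj : ∀ w : H ⊗[K] H,
      (LinearMap.lTensor H (muH K H))
        ((LinearMap.lTensor H (LinearMap.lTensor H (twistAntipode K H F Finv)))
          ((LinearMap.lTensor H (twistComul K H F Finv)) w))
      = counitRight K H w ⊗ₜ[K] (1:H) := by
    intro w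
    induction w using TensorProduct.induction_on with
    | zero => simp
    | tmul a s =>
        simp only [LinearMap.lTensor_tmul, counitRight_tmul, nuSF K H F Finv hF,
          TensorProduct.tmul_smul, TensorProduct.smul_tmul']
    | add p q hp hq => simp only [map_add, TensorProduct.add_tmul, hp, hq]
  rw [hj, counitRightF K H F Finv hF]

lemma K2 (hF : IsTwist K H F Finv) (a s : H) :
    Gam K H (Finv * (twistComul K H F Finv a * ((1:H) ⊗ₜ[K] twistAntipode K H F Finv s)))
      = (a ⊗ₜ[K] MulOpposite.op (twistAntipode K H F Finv s)) * Gam K H Finv := by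
  rw [← mul_assoc, tw2 K H F Finv hF, G3, G2]
  rw [← mul_assoc]
  congr 1
  simp [Algebra.TensorProduct.tmul_mul_tmul]

lemma hstep (hF : IsTwist K H F Finv) (u : H ⊗[K] H) :
    Gam K H (Finv * ((LinearMap.lTensor H (muH K H)) ((TensorProduct.assoc K H H H)
      ((LinearMap.rTensor H (twistComul K H F Finv))
        ((LinearMap.lTensor H (twistAntipode K H F Finv)) u)))))
    = (LinearMap.lTensor H (opL K H)) ((LinearMap.lTensor H (twistAntipode K H F Finv)) u)
        * Gam K H Finv := by
  induction u using TensorProduct.induction_on with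
  | zero => simp
  | tmul a s =>
      simp only [LinearMap.lTensor_tmul, LinearMap.rTensor_tmul, lmu_assoc]
      rw [K2 K H F Finv hF a s]
      rfl
  | add p q hp hq =>
      simp only [map_add, mul_add, add_mul, hp, hq]

lemma main_elt (hF : IsTwist K H F Finv) (ξ : H) :
    Gam K H Finv * adB K H ξ =
      (LinearMap.lTensor H (opL K H)) ((LinearMap.lTensor H (twistAntipode K H F Finv))
        (twistComul K H F Finv ξ)) * Gam K H Finv := by
  rw [← G1, ← KW K H F Finv hF ξ]
  exact hstep K H F Finv hF (twistComul K H F Finv ξ)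

end Assembly

section BopAssembly

variable (F Finv : H ⊗[K] H)
variable {M : Type*} [AddCommGroup M] [Module K M]

/-- representation of `H ⊗ Hᵐᵒᵖ` on `M` induced by commuting left/right actions. -/
def bop (L Rm : H →ₗ[K] M →ₗ[K] M) : H ⊗[K] Hᵐᵒᵖ →ₗ[K] M →ₗ[K] M :=
  TensorProduct.lift (((LinearMap.llcomp K M M M) ∘ₗ L).compl₂
    (Rm ∘ₗ (MulOpposite.opLinearEquiv K).symm.toLinearMap))

@[simp] lemma bop_tmul (L Rm : H →ₗ[K] M →ₗ[K] M) (x : H) (y : Hᵐᵒᵖ) :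
    bop K H L Rm (x ⊗ₜ[K] y) = L x ∘ₗ Rm y.unop := by
  simp [bop]
  rfl

@[simp] lemma twistEnd_tmul (F1 F2 : H →ₗ[K] M →ₗ[K] M) (x y : H) :
    twistEnd K H F1 F2 (x ⊗ₜ[K] y) = F1 x ∘ₗ F2 y := by
  simp [twistEnd]
  rfl

lemma bop_mul {m : M →ₗ[K] M →ₗ[K] M} {L Rm : H →ₗ[K] M →ₗ[K] M}
    (h𝔸 : IsHBimoduleAlgebra K H m L Rm) (z w : H ⊗[K] Hᵐᵒᵖ) :
    bop K H L Rm (z * w) = bop K H L Rm z ∘ₗ bop K H L Rm w := by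
  induction z using TensorProduct.induction_on with
  | zero => simp
  | tmul x yo =>
      induction w using TensorProduct.induction_on with
      | zero => simp
      | tmul u vo =>
          rw [Algebra.TensorProduct.tmul_mul_tmul, bop_tmul, bop_tmul, bop_tmul]
          apply LinearMap.ext
          intro P
          simp only [LinearMap.coe_comp, Function.comp_apply, MulOpposite.unop_mul]
          rw [h𝔸.left_mul, h𝔸.right_mul, h𝔸.commute]
      | add p q hp hq => simp only [mul_add, map_add, hp, hq, LinearMap.comp_add]
  | add p q hp hq => simp only [add_mul, map_add, hp, hq, LinearMap.add_comp]

lemma twistEnd_precomp (F1 F2 : H →ₗ[K] M →ₗ[K] M) (f : H →ₗ[K] H) (w : H ⊗[K] H) :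
    twistEnd K H F1 (F2 ∘ₗ f) w = twistEnd K H F1 F2 ((LinearMap.lTensor H f) w) := by
  induction w using TensorProduct.induction_on with
  | zero => simp
  | tmul x y => simp
  | add p q hp hq => simp only [map_add, hp, hq]

lemma bop_psi (L Rm : H →ₗ[K] M →ₗ[K] M) (w : H ⊗[K] H) :
    bop K H L Rm ((LinearMap.lTensor H (opL K H)) w) = twistEnd K H L Rm w := by
  induction w using TensorProduct.induction_on with
  | zero => simp
  | tmul x y => simp
  | add p q hp hq => simp only [map_add, hp, hq]

lemma adjAct_eq (L Rm : H →ₗ[K] M →ₗ[K] M) (η : H) :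
    adjAct K H L Rm η = bop K H L Rm (adB K H η) := by
  rw [adB_eq, bop_psi, ← twistEnd_precomp]
  rfl

lemma adjActF_eq (L Rm : H →ₗ[K] M →ₗ[K] M) (η : H) :
    adjActF K H F Finv L Rm η =
      bop K H L Rm ((LinearMap.lTensor H (opL K H))
        ((LinearMap.lTensor H (twistAntipode K H F Finv)) (twistComul K H F Finv η))) := by
  rw [bop_psi, ← twistEnd_precomp]
  rfl

lemma DF_eq {m : M →ₗ[K] M →ₗ[K] M} {L Rm : H →ₗ[K] M →ₗ[K] M}
    (h𝔸 : IsHBimoduleAlgebra K H m L Rm) :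
    DF K H Finv L Rm = bop K H L Rm (Gam K H Finv) := by
  have key : ∀ z : H ⊗[K] H,
      twistEnd K H Rm (adjAct K H L Rm) ((TensorProduct.comm K H H) z) =
        bop K H L Rm (Gam K H z) := by
    intro z
    induction z using TensorProduct.induction_on with
    | zero => simp
    | tmul x y =>
        rw [TensorProduct.comm_tmul, twistEnd_tmul, Gam_tmul, bop_mul K H h𝔸,
          ← adjAct_eq, gB_apply, bop_tmul]
        apply LinearMap.ext
        intro P
        simp only [LinearMap.coe_comp, Function.comp_apply, MulOpposite.unop_op]
        rw [h𝔸.left_one]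
    | add p q hp hq => simp only [map_add, hp, hq]
  exact key Finv

end BopAssembly

/-- `D_F` intertwines the `H`-adjoint action `▶` with the
`H^F`-adjoint action `▶_F`:  `D_F(ξ ▶ P) = ξ ▶_F D_F(P)`. -/

theorem DF_intertwines_adjoint_actions (F Finv : H ⊗[K] H) (hF : IsTwist K H F Finv)
    (m : M →ₗ[K] M →ₗ[K] M) (L Rm : H →ₗ[K] M →ₗ[K] M)
    (h𝔸 : IsHBimoduleAlgebra K H m L Rm) :
    ∀ (ξ : H) (P : M),
      DF K H Finv L Rm (adjAct K H L Rm ξ P)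
        = adjActF K H F Finv L Rm ξ (DF K H Finv L Rm P) := by
  intro ξ P
  have e1 : DF K H Finv L Rm (adjAct K H L Rm ξ P)
      = bop K H L Rm (Gam K H Finv * adB K H ξ) P := by
    rw [DF_eq K H Finv h𝔸, adjAct_eq, bop_mul K H h𝔸]
    rfl
  have e2 : adjActF K H F Finv L Rm ξ (DF K H Finv L Rm P)
      = bop K H L Rm ((LinearMap.lTensor H (opL K H))
          ((LinearMap.lTensor H (twistAntipode K H F Finv)) (twistComul K H F Finv ξ))
          * Gam K H Finv) P := by
    rw [DF_eq K H Finv h𝔸, adjActF_eq, bop_mul K H h𝔸]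
    rfl
  rw [e1, e2, main_elt K H F Finv hF ξ]

end TwistPaper
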